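/- Every L-stationary point of the sparse problem min f(x) + λ‖x‖₀ + I_{[-ρ1,ρ1]}(x) is a basic stationary point, i.e., x̀_S = argmin_{z ∈ [-ρ1,ρ1]^{|S|}} (L/2)‖z - (x̀ - ∇f(x̀)/L)_S‖₂² where S = {i : x̀_i ≠ 0}. -/

import Mathlib

open RealInnerProductSpace

/-- `‖v‖₀`: number of nonzero components. -/
noncomputable def l0norm {n : ℕ} (v : EuclideanSpace ℝ (Fin n)) : ℕ :=
  (Finset.univ.filter fun i => v i ≠ 0).card

/-- Every `L`-stationary point of `min f(x) + λ‖x‖₀ + I_{[-ρ1,ρ1]}(x)` is a basic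
stationary point: `x̀_S` minimizes `z_S ↦ (L/2)‖z_S - (x̀ - ∇f(x̀)/L)_S‖²` over the box,
where `S = {i : x̀ᵢ ≠ 0}`. -/
theorem L_stationary_is_basic {n : ℕ}
    (f : EuclideanSpace ℝ (Fin n) → ℝ) (g : EuclideanSpace ℝ (Fin n) → EuclideanSpace ℝ (Fin n))
    (L lam ρ : ℝ) (hL : 0 < L) (hlam : 0 < lam) (hρ : 0 < ρ)
    (hgrad : ∀ x, HasGradientAt f (g x) x)
    (hlip : ∀ x y, ‖g x - g y‖ ≤ L * ‖x - y‖)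
    (xs : EuclideanSpace ℝ (Fin n)) (hxbox : ∀ i, |xs i| ≤ ρ)
    (hstat : ∀ z : EuclideanSpace ℝ (Fin n), (∀ i, |z i| ≤ ρ) →
      ⟪g xs, xs - xs⟫ + L / 2 * ‖xs - xs‖ ^ 2 + lam * l0norm xs ≤
        ⟪g xs, z - xs⟫ + L / 2 * ‖z - xs‖ ^ 2 + lam * l0norm z) :
    ∀ z : EuclideanSpace ℝ (Fin n), (∀ i, |z i| ≤ ρ) →
      ∑ i ∈ Finset.univ.filter (fun i => xs i ≠ 0),
          L / 2 * (xs i - (xs i - g xs i / L)) ^ 2 ≤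
        ∑ i ∈ Finset.univ.filter (fun i => xs i ≠ 0),
          L / 2 * (z i - (xs i - g xs i / L)) ^ 2 := by
  intro z hz
  classical
  set S := Finset.univ.filter (fun i => xs i ≠ 0) with hS
  set w : EuclideanSpace ℝ (Fin n) := WithLp.toLp 2 (fun i => if xs i ≠ 0 then z i else 0) with hw
  have hwval : ∀ i, w i = if xs i ≠ 0 then z i else 0 := fun i => rfl
  have hwbox : ∀ i, |w i| ≤ ρ := by
    intro i
    rw [hwval]
    by_cases h : xs i ≠ 0
    · rw [if_pos h]; exact hz i
    · rw [if_neg h, abs_zero]; exact hρ.le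
  have hl0 : l0norm w ≤ l0norm xs := by
    apply Finset.card_le_card
    intro i hi
    simp only [Finset.mem_filter, Finset.mem_univ, true_and] at hi ⊢
    by_contra h
    rw [hwval] at hi
    simp [h] at hi
  have h1 := hstat w hwbox
  simp only [sub_self, norm_zero, inner_zero_right] at h1
  have hlam' : (lam : ℝ) * l0norm w ≤ lam * l0norm xs :=
    mul_le_mul_of_nonneg_left (Nat.cast_le.mpr hl0) hlam.le
  have h2 : 0 ≤ ⟪g xs, w - xs⟫ + L / 2 * ‖w - xs‖ ^ 2 := by nlinarith [h1]
  have hdiff : ∀ i, (w - xs) i = (if xs i ≠ 0 then z i - xs i else 0) := by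
    intro i
    have : (w - xs) i = w i - xs i := rfl
    rw [this, hwval]
    by_cases h : xs i ≠ 0
    · simp [h]
    · push_neg at h; simp [h]
  have hinner : ⟪g xs, w - xs⟫ = ∑ i ∈ S, g xs i * (z i - xs i) := by
    rw [PiLp.inner_apply]
    rw [← Finset.sum_subset (Finset.filter_subset (fun i => xs i ≠ 0) Finset.univ)]
    · apply Finset.sum_congr rfl
      intro i hi
      simp only [hS, Finset.mem_filter, Finset.mem_univ, true_and] at hi
      rw [hdiff i]
      simp [hi, RCLike.inner_apply, mul_comm]
    · intro i _ hi
      simp only [hS, Finset.mem_filter, Finset.mem_univ, true_and] at hi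
      rw [RCLike.inner_apply, hdiff i]
      simp [hi]
  have hnorm : ‖w - xs‖ ^ 2 = ∑ i ∈ S, (z i - xs i) ^ 2 := by
    rw [← real_inner_self_eq_norm_sq, PiLp.inner_apply]
    rw [← Finset.sum_subset (Finset.filter_subset (fun i => xs i ≠ 0) Finset.univ)]
    · apply Finset.sum_congr rfl
      intro i hi
      simp only [hS, Finset.mem_filter, Finset.mem_univ, true_and] at hi
      rw [RCLike.inner_apply, hdiff i]
      simp [hi]
      ring
    · intro i _ hi
      simp only [hS, Finset.mem_filter, Finset.mem_univ, true_and] at hi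
      rw [RCLike.inner_apply, hdiff i]
      simp [hi]
  have key : (∑ i ∈ S, L / 2 * (z i - (xs i - g xs i / L)) ^ 2)
      - (∑ i ∈ S, L / 2 * (xs i - (xs i - g xs i / L)) ^ 2)
      = L / 2 * (∑ i ∈ S, (z i - xs i) ^ 2) + ∑ i ∈ S, g xs i * (z i - xs i) := by
    rw [Finset.mul_sum, ← Finset.sum_sub_distrib, ← Finset.sum_add_distrib]
    apply Finset.sum_congr rfl
    intro i _
    have hL' : L ≠ 0 := hL.ne'
    field_simp
    ring
  rw [hinner, hnorm] at h2
  linarith [key, h2]
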